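/- Let (V₁, ⟨·,·⟩_h, V₂, B) be a step-two Carnot datum with dim V₁ = m and dim V₂ = m₂, set Q = m + 2m₂, let g be any inner product on V₂, and let ε₁,…,ε_{m₂} be a g-orthonormal basis of V₂. Define Φ_g(x,t) = 16(Q+2)·⟨((J^g_t)² + ‖t‖_g²·id)x, x⟩_h / N_g(x,t)⁶ − 2·Σ_{q=1}^{m₂} ⟨((J^g_{ε_q})² + id)x, x⟩_h / N_g(x,t)². Then δ(g) ≤ (3·√(3(Q+2)) / (2(m+2)^{3/2})) · sup{ |Φ_g(x,t)| : (x,t) ∈ V₁ × V₂, (x,t) ≠ (0,0) }. -/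

import Mathlib

open scoped RealInnerProductSpace

noncomputable section

variable {V₁ : Type*} [NormedAddCommGroup V₁] [InnerProductSpace ℝ V₁] [FiniteDimensional ℝ V₁]
variable {V₂ : Type*} [AddCommGroup V₂] [Module ℝ V₂] [FiniteDimensional ℝ V₂]

/-- `g` is an inner product (symmetric positive-definite bilinear form) on `V₂`. -/
structure IsInnerProd (g : V₂ →ₗ[ℝ] V₂ →ₗ[ℝ] ℝ) : Prop where
  symm : ∀ s t : V₂, g s t = g t s
  posdef : ∀ t : V₂, t ≠ 0 → 0 < g t t

/-- The norm `‖t‖_g = √(g t t)` associated to a vertical inner product `g`. -/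
def gnorm (g : V₂ →ₗ[ℝ] V₂ →ₗ[ℝ] ℝ) (t : V₂) : ℝ := Real.sqrt (g t t)

/-- The Hilbert–Schmidt norm `‖F‖_HS = √(trace(F* F))` of an endomorphism of the
inner product space `V₁`. -/
def hsNorm (F : V₁ →ₗ[ℝ] V₁) : ℝ :=
  Real.sqrt (LinearMap.trace ℝ V₁ (LinearMap.adjoint F ∘ₗ F))

/-- `J` is the J-operator of the bracket `B` with respect to the vertical inner product `g`:
`⟨J_T U, V⟩_h = g(B(U,V), T)` for all `U V : V₁`, `T : V₂`. -/
def IsJOp (B : V₁ →ₗ[ℝ] V₁ →ₗ[ℝ] V₂) (g : V₂ →ₗ[ℝ] V₂ →ₗ[ℝ] ℝ)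
    (J : V₂ → V₁ →ₗ[ℝ] V₁) : Prop :=
  ∀ (T : V₂) (U V : V₁), ⟪J T U, V⟫ = g (B U V) T

/-- The H-type deviation relative to a fixed vertical inner product `g` with J-operator `J`:
`δ(g) = (dim V₁)^{-1/2} sup { ‖(J_T)² + id‖_HS : ‖T‖_g = 1 }`. -/
def deltaOf (g : V₂ →ₗ[ℝ] V₂ →ₗ[ℝ] ℝ) (J : V₂ → V₁ →ₗ[ℝ] V₁) : ℝ :=
  (Real.sqrt (Module.finrank ℝ V₁))⁻¹ *
    sSup ((fun T => hsNorm (J T ∘ₗ J T + LinearMap.id)) '' {T : V₂ | gnorm g T = 1})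

/-- The H-type deviation of a step-two Carnot datum: the infimum of `δ(g)` over all vertical
inner products `g` on `V₂`. -/
def htypeDeviation (B : V₁ →ₗ[ℝ] V₁ →ₗ[ℝ] V₂) : ℝ :=
  sInf { d : ℝ | ∃ (g : V₂ →ₗ[ℝ] V₂ →ₗ[ℝ] ℝ) (J : V₂ → V₁ →ₗ[ℝ] V₁),
    IsInnerProd g ∧ IsJOp B g J ∧ d = deltaOf g J }

end

noncomputable section

open scoped RealInnerProductSpace


section AuxLemmas

set_option linter.unusedSectionVars false

variable {V₁ : Type*} [NormedAddCommGroup V₁] [InnerProductSpace ℝ V₁] [FiniteDimensional ℝ V₁]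
variable {V₂ : Type*} [AddCommGroup V₂] [Module ℝ V₂] [FiniteDimensional ℝ V₂]
variable {B : V₁ →ₗ[ℝ] V₁ →ₗ[ℝ] V₂} {g : V₂ →ₗ[ℝ] V₂ →ₗ[ℝ] ℝ} {J : V₂ → V₁ →ₗ[ℝ] V₁}

lemma aux_trace_sum {n : ℕ} (b : OrthonormalBasis (Fin n) ℝ V₁) (f : V₁ →ₗ[ℝ] V₁) :
    LinearMap.trace ℝ V₁ f = ∑ i, ⟪f (b i), b i⟫ := by
  rw [LinearMap.trace_eq_matrix_trace ℝ b.toBasis f, Matrix.trace]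
  congr 1
  ext i
  rw [Matrix.diag_apply, LinearMap.toMatrix_apply, OrthonormalBasis.coe_toBasis,
    OrthonormalBasis.coe_toBasis_repr_apply, b.repr_apply_apply, real_inner_comm]

lemma aux_hsNorm_le {A : V₁ →ₗ[ℝ] V₁} (hA : A.IsSymmetric) {D : ℝ} (hD : 0 ≤ D)
    (h : ∀ x : V₁, ‖x‖ = 1 → |⟪A x, x⟫| ≤ D) :
    hsNorm A ≤ Real.sqrt (Module.finrank ℝ V₁) * D := by
  set n := Module.finrank ℝ V₁ with hn
  have hadj : LinearMap.adjoint A = A := by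
    have := (LinearMap.isSymmetric_iff_isSelfAdjoint A).mp hA
    rw [← LinearMap.star_eq_adjoint]; exact this
  have hfin : Module.finrank ℝ V₁ = n := hn.symm
  let b := hA.eigenvectorBasis hfin
  let μ := hA.eigenvalues hfin
  have hb : ∀ i, A (b i) = μ i • b i := fun i => hA.apply_eigenvectorBasis hfin i
  have hnorm1 : ∀ i, ‖b i‖ = 1 := fun i => b.orthonormal.1 i
  have hμ : ∀ i, |μ i| ≤ D := by
    intro i
    have key : ⟪A (b i), b i⟫ = μ i := by
      rw [hb i, real_inner_smul_left, real_inner_self_eq_norm_sq, hnorm1 i]; ring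
    have := h (b i) (hnorm1 i)
    rwa [key] at this
  have htr : LinearMap.trace ℝ V₁ (LinearMap.adjoint A ∘ₗ A) = ∑ i, (μ i) ^ 2 := by
    rw [hadj, aux_trace_sum b]
    congr 1; ext i
    rw [LinearMap.comp_apply, hb i, map_smul, hb i, smul_smul, real_inner_smul_left,
      real_inner_self_eq_norm_sq, hnorm1 i]
    ring
  have hsum : ∑ i, (μ i) ^ 2 ≤ n * D ^ 2 := by
    calc ∑ i, (μ i) ^ 2 ≤ ∑ _i : Fin n, D ^ 2 := by
          apply Finset.sum_le_sum; intro i _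
          have := hμ i
          nlinarith [abs_nonneg (μ i), sq_abs (μ i)]
      _ = n * D ^ 2 := by simp [Finset.sum_const]
  rw [hsNorm, htr]
  calc Real.sqrt (∑ i, (μ i) ^ 2) ≤ Real.sqrt (n * D ^ 2) := Real.sqrt_le_sqrt hsum
    _ = Real.sqrt n * D := by
        rw [Real.sqrt_mul (by positivity), Real.sqrt_sq hD]

lemma aux_g_self_nonneg (hg : IsInnerProd g) (t : V₂) : 0 ≤ g t t := by
  rcases eq_or_ne t 0 with rfl | h
  · simp
  · exact (hg.posdef t h).le

lemma aux_gnorm_nonneg (g : V₂ →ₗ[ℝ] V₂ →ₗ[ℝ] ℝ) (t : V₂) : 0 ≤ gnorm g t :=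
  Real.sqrt_nonneg _

lemma aux_gnorm_sq (hg : IsInnerProd g) (t : V₂) : gnorm g t ^ 2 = g t t :=
  Real.sq_sqrt (aux_g_self_nonneg hg t)

lemma aux_B_skew (hAlt : ∀ U : V₁, B U U = 0) (U V : V₁) : B U V = - B V U := by
  have h' : B U U + B V U + (B U V + B V V) = 0 := by
    simpa [map_add, LinearMap.add_apply] using hAlt (U + V)
  rw [hAlt, hAlt] at h'
  simp only [zero_add, add_zero] at h'
  exact eq_neg_of_add_eq_zero_left (by rw [add_comm]; exact h')

lemma aux_J_skew (hJ : IsJOp B g J) (hAlt : ∀ U : V₁, B U U = 0) (T : V₂) (u v : V₁) :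
    ⟪J T u, v⟫ = -⟪J T v, u⟫ := by
  rw [hJ T u v, hJ T v u, aux_B_skew hAlt u v, map_neg, LinearMap.neg_apply]

lemma aux_J_self (hJ : IsJOp B g J) (hAlt : ∀ U : V₁, B U U = 0) (T : V₂) (u : V₁) :
    ⟪J T (J T u), u⟫ = -‖J T u‖ ^ 2 := by
  rw [aux_J_skew hJ hAlt T (J T u) u, real_inner_self_eq_norm_sq]

lemma aux_J_sum (hJ : IsJOp B g J) {k : ℕ} (d : Fin k → ℝ) (T : Fin k → V₂) (x : V₁) :
    J (∑ q, d q • T q) x = ∑ q, d q • J (T q) x := by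
  apply ext_inner_right ℝ
  intro v
  rw [hJ, map_sum, sum_inner]
  congr 1; ext q
  rw [map_smul, smul_eq_mul, ← hJ, real_inner_smul_left]

lemma aux_J_smul (hJ : IsJOp B g J) (s : ℝ) (T : V₂) (x : V₁) :
    J (s • T) x = s • J T x := by
  apply ext_inner_right ℝ
  intro v
  rw [hJ, map_smul, smul_eq_mul, ← hJ, real_inner_smul_left]

lemma aux_rep (hg : IsInnerProd g) {m₂ : ℕ} (hm₂ : 1 ≤ m₂) (hdim₂ : Module.finrank ℝ V₂ = m₂)
    (ε : Fin m₂ → V₂) (hε : ∀ q r : Fin m₂, g (ε q) (ε r) = if q = r then 1 else 0)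
    (t : V₂) :
    ∃ d : Fin m₂ → ℝ, t = ∑ q, d q • ε q ∧ ∑ q, d q ^ 2 = g t t := by
  have hli : LinearIndependent ℝ ε := by
    rw [Fintype.linearIndependent_iff]
    intro d hd q
    have h0 : g (∑ i, d i • ε i) (ε q) = 0 := by rw [hd]; simp
    rw [map_sum] at h0
    simp only [map_smul, LinearMap.smul_apply, LinearMap.sum_apply, hε, smul_eq_mul] at h0
    simpa [Finset.sum_ite_eq'] using h0
  haveI : Nonempty (Fin m₂) := ⟨⟨0, hm₂⟩⟩
  have hcard : Fintype.card (Fin m₂) = Module.finrank ℝ V₂ := by simp [hdim₂]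
  let bb : Module.Basis (Fin m₂) ℝ V₂ := basisOfLinearIndependentOfCardEqFinrank hli hcard
  have hbb : ∀ q, bb q = ε q := fun q => by
    simp [bb, coe_basisOfLinearIndependentOfCardEqFinrank]
  refine ⟨fun q => bb.repr t q, ?_, ?_⟩
  · conv_lhs => rw [← bb.sum_repr t]
    congr 1; ext q; rw [hbb]
  · have hco : ∀ q, g t (ε q) = bb.repr t q := by
      intro q
      conv_lhs => rw [← bb.sum_repr t]
      rw [map_sum, LinearMap.sum_apply]
      simp only [map_smul, LinearMap.smul_apply, hbb, hε, smul_eq_mul]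
      simp [Finset.sum_ite_eq']
    calc ∑ q, (bb.repr t q) ^ 2 = ∑ q, bb.repr t q * g t (ε q) := by
          congr 1; ext q; rw [hco]; ring
      _ = g t t := by
          have ht : t = ∑ q, bb.repr t q • ε q := by
            conv_lhs => rw [← bb.sum_repr t]
            exact Finset.sum_congr rfl fun q _ => by rw [hbb]
          conv_rhs => rw [show g t t = g t (∑ q, bb.repr t q • ε q) from by rw [← ht]]
          rw [map_sum]
          simp [map_smul, mul_comm]

end AuxLemmas

set_option maxHeartbeats 1600000 in
/-- Converse stability estimate for the sub-Laplacian of the Kaplan quasinorm: with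
`Q = m + 2m₂` and `Φ_g` as below,
`δ(g) ≤ (3√(3(Q+2)) / (2(m+2)^{3/2})) · sup { |Φ_g(x,t)| : (x,t) ≠ (0,0) }`. -/
theorem deviation_le_subLaplacian_defect
    {V₁ : Type*} [NormedAddCommGroup V₁] [InnerProductSpace ℝ V₁] [FiniteDimensional ℝ V₁]
    {V₂ : Type*} [AddCommGroup V₂] [Module ℝ V₂] [FiniteDimensional ℝ V₂]
    (m m₂ : ℕ) (hm : 1 ≤ m) (hdim₁ : Module.finrank ℝ V₁ = m)
    (hm₂ : 1 ≤ m₂) (hdim₂ : Module.finrank ℝ V₂ = m₂)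
    (Q : ℕ) (hQ : Q = m + 2 * m₂)
    (B : V₁ →ₗ[ℝ] V₁ →ₗ[ℝ] V₂)
    (hAlt : ∀ U : V₁, B U U = 0)
    (hSpan : Submodule.span ℝ {t : V₂ | ∃ U V : V₁, B U V = t} = ⊤)
    (g : V₂ →ₗ[ℝ] V₂ →ₗ[ℝ] ℝ) (hg : IsInnerProd g)
    (J : V₂ → V₁ →ₗ[ℝ] V₁) (hJ : IsJOp B g J)
    (ε : Fin m₂ → V₂) (hε : ∀ q r : Fin m₂, g (ε q) (ε r) = if q = r then 1 else 0)
    (N : V₁ → V₂ → ℝ)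
    (hN : ∀ (x : V₁) (t : V₂), N x t = (‖x‖ ^ 4 + 16 * gnorm g t ^ 2) ^ ((1 : ℝ) / 4))
    (Φ : V₁ → V₂ → ℝ)
    (hΦ : ∀ (x : V₁) (t : V₂), Φ x t =
      16 * ((Q : ℝ) + 2) *
          ⟪((J t ∘ₗ J t) + gnorm g t ^ 2 • (LinearMap.id : V₁ →ₗ[ℝ] V₁)) x, x⟫ / N x t ^ 6
        - 2 * ∑ q : Fin m₂,
            ⟪((J (ε q) ∘ₗ J (ε q)) + (LinearMap.id : V₁ →ₗ[ℝ] V₁)) x, x⟫ / N x t ^ 2) :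
    deltaOf g J ≤
      (3 * Real.sqrt (3 * ((Q : ℝ) + 2)) / (2 * ((m : ℝ) + 2) ^ ((3 : ℝ) / 2))) *
        sSup { r : ℝ | ∃ (x : V₁) (t : V₂), ¬(x = 0 ∧ t = 0) ∧ r = |Φ x t| } := by
  classical
  -- numeric setup
  have hmR : (1:ℝ) ≤ (m:ℝ) := by exact_mod_cast hm
  have hm₂R : (1:ℝ) ≤ (m₂:ℝ) := by exact_mod_cast hm₂
  have hm2R : (0:ℝ) < (m:ℝ) + 2 := by linarith
  have hQR : (Q:ℝ) = (m:ℝ) + 2*(m₂:ℝ) := by rw [hQ]; push_cast; ring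
  have hQ2pos : (0:ℝ) < (Q:ℝ) + 2 := by positivity
  obtain ⟨u, hu_def⟩ : ∃ u : ℝ, u = 3*((Q:ℝ)+2)/((m:ℝ)+2) := ⟨_, rfl⟩
  have hu_eq : ((m:ℝ)+2)*u = 3*((Q:ℝ)+2) := by
    rw [hu_def]; field_simp
  have hu1 : 1 < u := by
    rw [hu_def, lt_div_iff₀ hm2R]
    nlinarith
  have hu0 : 0 < u := lt_trans one_pos hu1
  obtain ⟨s, hs_def⟩ : ∃ s : ℝ, s = Real.sqrt (u-1) / 4 := ⟨_, rfl⟩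
  have hs0 : 0 ≤ s := by rw [hs_def]; positivity
  have hs16 : 16*s^2 = u - 1 := by
    rw [hs_def, div_pow, Real.sq_sqrt (by linarith : (0:ℝ) ≤ u - 1)]; ring
  set A : V₂ → V₁ →ₗ[ℝ] V₁ := fun T => J T ∘ₗ J T + LinearMap.id with hA_def
  have hAx : ∀ (T : V₂) (x : V₁), ⟪A T x, x⟫ = -‖J T x‖^2 + ‖x‖^2 := by
    intro T x
    rw [hA_def]
    simp only [LinearMap.add_apply, LinearMap.comp_apply, LinearMap.id_apply]
    rw [inner_add_left, aux_J_self hJ hAlt, real_inner_self_eq_norm_sq]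
  have hAsymm : ∀ T : V₂, (A T).IsSymmetric := by
    intro T x y
    rw [hA_def]
    simp only [LinearMap.add_apply, LinearMap.comp_apply, LinearMap.id_apply]
    rw [inner_add_left, inner_add_right]
    have e1 : ⟪J T (J T x), y⟫ = -⟪J T y, J T x⟫ := aux_J_skew hJ hAlt T (J T x) y
    have e2 : ⟪J T (J T y), x⟫ = -⟪J T x, J T y⟫ := aux_J_skew hJ hAlt T (J T y) x
    have e3 : ⟪x, J T (J T y)⟫ = ⟪J T (J T y), x⟫ := real_inner_comm _ _
    have e4 : ⟪J T y, J T x⟫ = ⟪J T x, J T y⟫ := real_inner_comm _ _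
    linarith [e1, e2, e3, e4]
  -- operator norm bound for J
  set CJ : ℝ := ∑ q, ‖LinearMap.toContinuousLinearMap (J (ε q))‖ with hCJ_def
  have hCJ0 : 0 ≤ CJ := Finset.sum_nonneg fun q _ => norm_nonneg _
  have hεg : ∀ q, gnorm g (ε q) = 1 := by
    intro q; rw [gnorm, hε q q]; simp
  have hJb : ∀ (t : V₂) (x : V₁), ‖J t x‖ ≤ CJ * gnorm g t * ‖x‖ := by
    intro t x
    obtain ⟨d, ht, hdsq⟩ := aux_rep hg hm₂ hdim₂ ε hε t
    have hd : ∀ q, |d q| ≤ gnorm g t := by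
      intro q
      have h1 : d q ^ 2 ≤ g t t := by
        rw [← hdsq]
        exact Finset.single_le_sum (f := fun q => d q ^ 2)
          (fun i _ => sq_nonneg _) (Finset.mem_univ q)
      calc |d q| = Real.sqrt (d q ^ 2) := (Real.sqrt_sq_eq_abs _).symm
        _ ≤ Real.sqrt (g t t) := Real.sqrt_le_sqrt h1
        _ = gnorm g t := rfl
    conv_lhs => rw [ht, aux_J_sum hJ d ε]
    calc ‖∑ q, d q • J (ε q) x‖ ≤ ∑ q, ‖d q • J (ε q) x‖ := norm_sum_le _ _
      _ = ∑ q, |d q| * ‖J (ε q) x‖ := by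
          congr 1; ext q; rw [norm_smul, Real.norm_eq_abs]
      _ ≤ ∑ q, gnorm g t * (‖LinearMap.toContinuousLinearMap (J (ε q))‖ * ‖x‖) := by
          apply Finset.sum_le_sum
          intro q _
          apply mul_le_mul (hd q) _ (norm_nonneg _) (aux_gnorm_nonneg g t)
          have h2 := (LinearMap.toContinuousLinearMap (J (ε q))).le_opNorm x
          rwa [LinearMap.coe_toContinuousLinearMap'] at h2
      _ = CJ * gnorm g t * ‖x‖ := by
          rw [← Finset.mul_sum, hCJ_def, ← Finset.sum_mul]; ring
  -- the sup D of |⟪A T x, x⟫| over unit spheres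
  set SD : Set ℝ := {r | ∃ x T, ‖x‖ = 1 ∧ gnorm g T = 1 ∧ r = |⟪A T x, x⟫|} with hSD_def
  have hSDbdd : BddAbove SD := by
    refine ⟨1 + CJ^2, ?_⟩
    rintro r ⟨x, T, hx, hT, rfl⟩
    rw [hAx T x, hx]
    have h1 := hJb T x
    rw [hT, hx] at h1
    have h2 : (0:ℝ) ≤ ‖J T x‖ := norm_nonneg _
    rw [abs_le]
    constructor <;> nlinarith
  haveI : Nontrivial V₁ := Module.nontrivial_of_finrank_pos
    (by rw [hdim₁]; omega)
  obtain ⟨x', hx'⟩ := exists_ne (0 : V₁)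
  set x₀ : V₁ := (‖x'‖⁻¹ : ℝ) • x' with hx₀_def
  have hx₀ : ‖x₀‖ = 1 := norm_smul_inv_norm hx'
  have hx₀ne : x₀ ≠ 0 := by
    intro h; rw [h, norm_zero] at hx₀; norm_num at hx₀
  set q0 : Fin m₂ := ⟨0, hm₂⟩ with hq0_def
  set D : ℝ := sSup SD with hD_def
  have hDmem : ∀ (x : V₁) (T : V₂), ‖x‖ = 1 → gnorm g T = 1 → |⟪A T x, x⟫| ≤ D := by
    intro x T hx hT
    exact le_csSup hSDbdd ⟨x, T, hx, hT, rfl⟩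
  have hD0 : 0 ≤ D := le_trans (abs_nonneg _) (hDmem x₀ (ε q0) hx₀ (hεg q0))
  -- the sup M of |Φ|
  set M : ℝ := sSup { r : ℝ | ∃ (x : V₁) (t : V₂), ¬(x = 0 ∧ t = 0) ∧ r = |Φ x t| }
    with hM_def
  have hSMbdd : BddAbove { r : ℝ | ∃ (x : V₁) (t : V₂), ¬(x = 0 ∧ t = 0) ∧ r = |Φ x t| } := by
    refine ⟨16*((Q:ℝ)+2)*(CJ^2+1) + 2*(m₂:ℝ)*(CJ^2+1), ?_⟩
    rintro r ⟨x, t, hxt, rfl⟩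
    set G : ℝ := gnorm g t with hG_def
    have hG0 : 0 ≤ G := aux_gnorm_nonneg g t
    have hy0 : 0 < ‖x‖^4 + 16*G^2 := by
      rcases not_and_or.mp hxt with hx | ht
      · have h1 : 0 < ‖x‖ := norm_pos_iff.mpr hx
        positivity
      · have h1 : 0 < g t t := hg.posdef t ht
        have h2 : G^2 = g t t := aux_gnorm_sq hg t
        nlinarith [pow_nonneg (norm_nonneg x) 4]
    have hNx : N x t = (‖x‖^4 + 16*G^2)^((1:ℝ)/4) := hN x t
    have hNpos : 0 < N x t := by rw [hNx]; exact Real.rpow_pos_of_pos hy0 _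
    have hN4 : (N x t)^4 = ‖x‖^4 + 16*G^2 := by
      rw [hNx, ← Real.rpow_natCast ((‖x‖^4 + 16*G^2)^((1:ℝ)/4)) 4,
        ← Real.rpow_mul hy0.le]
      norm_num
    have hxN : ‖x‖ ≤ N x t := by
      apply le_of_pow_le_pow_left₀ (by norm_num : (4:ℕ) ≠ 0) hNpos.le
      rw [hN4]; nlinarith [sq_nonneg G]
    have hx2 : ‖x‖^2 ≤ (N x t)^2 := by nlinarith [norm_nonneg x]
    have hG4 : 16*G^2 ≤ (N x t)^4 := by rw [hN4]; nlinarith [pow_nonneg (norm_nonneg x) 4]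
    rw [hΦ x t]
    have hT1 : |16 * ((Q : ℝ) + 2) *
        ⟪((J t ∘ₗ J t) + gnorm g t ^ 2 • (LinearMap.id : V₁ →ₗ[ℝ] V₁)) x, x⟫ / N x t ^ 6|
        ≤ 16*((Q:ℝ)+2)*(CJ^2+1) := by
      have hz : ⟪((J t ∘ₗ J t) + gnorm g t ^ 2 • (LinearMap.id : V₁ →ₗ[ℝ] V₁)) x, x⟫
          = -‖J t x‖^2 + G^2*‖x‖^2 := by
        simp only [LinearMap.add_apply, LinearMap.comp_apply, LinearMap.smul_apply,
          LinearMap.id_apply]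
        rw [inner_add_left, aux_J_self hJ hAlt, real_inner_smul_left,
          real_inner_self_eq_norm_sq, ← hG_def]
      have hJt := hJb t x
      rw [← hG_def] at hJt
      have hzb : |⟪((J t ∘ₗ J t) + gnorm g t ^ 2 • (LinearMap.id : V₁ →ₗ[ℝ] V₁)) x, x⟫|
          ≤ (CJ^2+1)*(G^2*‖x‖^2) := by
        rw [hz, abs_le]
        constructor <;> nlinarith [norm_nonneg (J t x), norm_nonneg x]
      rw [abs_div, abs_of_pos (by positivity : (0:ℝ) < N x t ^ 6),
        div_le_iff₀ (by positivity : (0:ℝ) < N x t ^ 6)]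
      have h6 : (N x t)^6 = (N x t)^4 * (N x t)^2 := by ring
      have hGx : 16*(G^2*‖x‖^2) ≤ (N x t)^6 := by
        rw [h6]
        have := mul_le_mul hG4 hx2 (by positivity) (by positivity : (0:ℝ) ≤ (N x t)^4)
        nlinarith [this]
      rw [abs_mul, abs_of_nonneg (by positivity : (0:ℝ) ≤ 16*((Q:ℝ)+2))]
      have ha1 := mul_le_mul_of_nonneg_left hzb (by positivity : (0:ℝ) ≤ 16*((Q:ℝ)+2))
      have ha2 := mul_le_mul_of_nonneg_left hGx
        (by positivity : (0:ℝ) ≤ ((Q:ℝ)+2)*(CJ^2+1))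
      have ha4 : (0:ℝ) ≤ ((Q:ℝ)+2)*(CJ^2+1)*(N x t)^6 := by positivity
      nlinarith [ha1, ha2, ha4]
    have hT2 : |2 * ∑ q : Fin m₂,
        ⟪((J (ε q) ∘ₗ J (ε q)) + (LinearMap.id : V₁ →ₗ[ℝ] V₁)) x, x⟫ / N x t ^ 2|
        ≤ 2*(m₂:ℝ)*(CJ^2+1) := by
      rw [abs_mul, abs_of_nonneg (by norm_num : (0:ℝ) ≤ 2)]
      have hterm : ∀ q : Fin m₂,
          |⟪((J (ε q) ∘ₗ J (ε q)) + (LinearMap.id : V₁ →ₗ[ℝ] V₁)) x, x⟫ / N x t ^ 2|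
          ≤ (CJ^2+1) := by
        intro q
        have hq : ⟪((J (ε q) ∘ₗ J (ε q)) + (LinearMap.id : V₁ →ₗ[ℝ] V₁)) x, x⟫
            = -‖J (ε q) x‖^2 + ‖x‖^2 := by
          simp only [LinearMap.add_apply, LinearMap.comp_apply, LinearMap.id_apply]
          rw [inner_add_left, aux_J_self hJ hAlt, real_inner_self_eq_norm_sq]
        have hJq := hJb (ε q) x
        rw [hεg q, mul_one] at hJq
        rw [abs_div, abs_of_pos (by positivity : (0:ℝ) < N x t ^ 2),
          div_le_iff₀ (by positivity : (0:ℝ) < N x t ^ 2)]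
        rw [hq, abs_le]
        constructor <;> nlinarith [norm_nonneg (J (ε q) x), norm_nonneg x]
      calc 2 * |∑ q : Fin m₂,
            ⟪((J (ε q) ∘ₗ J (ε q)) + (LinearMap.id : V₁ →ₗ[ℝ] V₁)) x, x⟫ / N x t ^ 2|
          ≤ 2 * ∑ q : Fin m₂,
            |⟪((J (ε q) ∘ₗ J (ε q)) + (LinearMap.id : V₁ →ₗ[ℝ] V₁)) x, x⟫ / N x t ^ 2| := by
            have := Finset.abs_sum_le_sum_abs
              (fun q : Fin m₂ =>
                ⟪((J (ε q) ∘ₗ J (ε q)) + (LinearMap.id : V₁ →ₗ[ℝ] V₁)) x, x⟫ / N x t ^ 2)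
              Finset.univ
            linarith
        _ ≤ 2 * ∑ _q : Fin m₂, (CJ^2+1) := by
            have := Finset.sum_le_sum (fun q (_ : q ∈ Finset.univ) => hterm q)
            linarith
        _ = 2*(m₂:ℝ)*(CJ^2+1) := by simp [Finset.sum_const]; ring
    calc |16 * ((Q : ℝ) + 2) *
          ⟪((J t ∘ₗ J t) + gnorm g t ^ 2 • (LinearMap.id : V₁ →ₗ[ℝ] V₁)) x, x⟫ / N x t ^ 6
          - 2 * ∑ q : Fin m₂,
            ⟪((J (ε q) ∘ₗ J (ε q)) + (LinearMap.id : V₁ →ₗ[ℝ] V₁)) x, x⟫ / N x t ^ 2|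
        ≤ |16 * ((Q : ℝ) + 2) *
          ⟪((J t ∘ₗ J t) + gnorm g t ^ 2 • (LinearMap.id : V₁ →ₗ[ℝ] V₁)) x, x⟫ / N x t ^ 6|
          + |2 * ∑ q : Fin m₂,
            ⟪((J (ε q) ∘ₗ J (ε q)) + (LinearMap.id : V₁ →ₗ[ℝ] V₁)) x, x⟫ / N x t ^ 2| :=
          abs_sub _ _
      _ ≤ 16*((Q:ℝ)+2)*(CJ^2+1) + 2*(m₂:ℝ)*(CJ^2+1) := add_le_add hT1 hT2
  have hMmem : ∀ (x : V₁) (t : V₂), ¬(x = 0 ∧ t = 0) → |Φ x t| ≤ M := by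
    intro x t h
    exact le_csSup hSMbdd ⟨x, t, h, rfl⟩
  have hM0 : 0 ≤ M :=
    le_trans (abs_nonneg _) (hMmem x₀ 0 (fun h => hx₀ne h.1))
  -- key pointwise estimate
  have hc0 : 0 < ((Q:ℝ)+2)*(u-1) := mul_pos hQ2pos (by linarith)
  obtain ⟨R, hR_def⟩ : ∃ R : ℝ, R = u^((1:ℝ)/2) := ⟨_, rfl⟩
  have hR0 : 0 < R := hR_def ▸ Real.rpow_pos_of_pos hu0 _
  have hP32 : u^((3:ℝ)/2) = u * R := by
    rw [hR_def, show (3:ℝ)/2 = 1 + 1/2 by norm_num, Real.rpow_add hu0, Real.rpow_one]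
  have hkey : ∀ (x : V₁) (T : V₂), ‖x‖ = 1 → gnorm g T = 1 →
      |⟪A T x, x⟫| * (((Q:ℝ)+2)*(u-1)) ≤ M*(u*R) + 2*((m₂:ℝ)*D)*u := by
    intro x T hx hT
    set t : V₂ := s • T with ht_def
    have hgTT : g T T = 1 := by
      have h := aux_gnorm_sq hg T; rw [hT] at h; nlinarith [h]
    have hgtt : g t t = s^2 := by
      have h : g t t = s * (s * g T T) := by
        rw [ht_def, map_smul]
        simp [LinearMap.smul_apply, map_smul, smul_eq_mul]
      rw [h, hgTT]; ring
    have hgt : gnorm g t = s := by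
      rw [gnorm, hgtt, Real.sqrt_sq hs0]
    have hyu : ‖x‖^4 + 16*(gnorm g t)^2 = u := by
      rw [hx, hgt]; nlinarith [hs16]
    have hNt : N x t = u^((1:ℝ)/4) := by
      rw [hN x t, hyu]
    have hN6 : (N x t)^6 = u^((3:ℝ)/2) := by
      rw [hNt, ← Real.rpow_natCast (u^((1:ℝ)/4)) 6, ← Real.rpow_mul hu0.le]
      norm_num
    have hN2 : (N x t)^2 = R := by
      rw [hNt, hR_def, ← Real.rpow_natCast (u^((1:ℝ)/4)) 2, ← Real.rpow_mul hu0.le]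
      norm_num
    have hfirst : ⟪((J t ∘ₗ J t) + gnorm g t ^ 2 • (LinearMap.id : V₁ →ₗ[ℝ] V₁)) x, x⟫
        = s^2 * ⟪A T x, x⟫ := by
      have hJt : ∀ z : V₁, J t z = s • J T z := fun z => by
        rw [ht_def]; exact aux_J_smul hJ s T z
      have hJTx : ⟪J T (J T x), x⟫ = -‖J T x‖^2 := aux_J_self hJ hAlt T x
      simp only [LinearMap.add_apply, LinearMap.comp_apply, LinearMap.smul_apply,
        LinearMap.id_apply]
      rw [inner_add_left, hJt x, map_smul, hJt (J T x), smul_smul,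
        real_inner_smul_left, real_inner_smul_left, hgt, hJTx, hAx T x,
        real_inner_self_eq_norm_sq, hx]
      ring
    set b : ℝ := ∑ q, ⟪A (ε q) x, x⟫ with hb_def
    have hbsum : (∑ q : Fin m₂,
        ⟪((J (ε q) ∘ₗ J (ε q)) + (LinearMap.id : V₁ →ₗ[ℝ] V₁)) x, x⟫ / N x t ^ 2)
        = b / R := by
      rw [hb_def, ← Finset.sum_div, hN2]
    have hΦv : Φ x t = ((Q:ℝ)+2)*(u-1) * ⟪A T x, x⟫ / (u*R) - 2*b/R := by
      rw [hΦ x t, hfirst, hN6, hP32, hbsum]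
      linear_combination (⟪A T x, x⟫ * ((Q:ℝ)+2) / (u*R)) * hs16
    have hRne : R ≠ 0 := ne_of_gt hR0
    have ha_eq : ⟪A T x, x⟫ * (((Q:ℝ)+2)*(u-1)) = Φ x t * (u*R) + 2*b*u := by
      rw [hΦv]
      have h1 : ((Q:ℝ)+2)*(u-1) * ⟪A T x, x⟫ / (u*R) * (u*R)
          = ((Q:ℝ)+2)*(u-1) * ⟪A T x, x⟫ :=
        div_mul_cancel₀ _ (ne_of_gt (mul_pos hu0 hR0))
      have h2 : 2*b/R*(u*R) = 2*b*u := by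
        rw [mul_comm u R, ← mul_assoc, div_mul_cancel₀ _ hRne]
      rw [sub_mul, h1, h2]
      ring
    have hΦle : |Φ x t| ≤ M := by
      apply hMmem x t
      intro h
      rw [h.1, norm_zero] at hx; norm_num at hx
    have hble : |b| ≤ (m₂:ℝ)*D := by
      rw [hb_def]
      calc |∑ q, ⟪A (ε q) x, x⟫| ≤ ∑ q, |⟪A (ε q) x, x⟫| :=
            Finset.abs_sum_le_sum_abs _ _
        _ ≤ ∑ _q : Fin m₂, D := Finset.sum_le_sum fun q _ => hDmem x (ε q) hx (hεg q)
        _ = (m₂:ℝ)*D := by simp [Finset.sum_const]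
    calc |⟪A T x, x⟫| * (((Q:ℝ)+2)*(u-1)) = |⟪A T x, x⟫ * (((Q:ℝ)+2)*(u-1))| := by
          rw [abs_mul, abs_of_pos hc0]
      _ = |Φ x t * (u*R) + 2*b*u| := by rw [ha_eq]
      _ ≤ |Φ x t| * (u*R) + 2 * |b| * u := by
          calc |Φ x t * (u*R) + 2*b*u| ≤ |Φ x t * (u*R)| + |2*b*u| := abs_add_le _ _
            _ = |Φ x t| * (u*R) + 2 * |b| * u := by
                rw [abs_mul (Φ x t) (u*R), abs_mul (2*b) u, abs_mul 2 b,
                  abs_of_pos (by positivity : (0:ℝ) < u*R),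
                  abs_of_pos hu0, abs_of_nonneg (by norm_num : (0:ℝ) ≤ 2)]
      _ ≤ M*(u*R) + 2*((m₂:ℝ)*D)*u := by
          have h1 : |Φ x t| * (u*R) ≤ M * (u*R) :=
            mul_le_mul_of_nonneg_right hΦle (by positivity)
          have h2 : 2 * |b| * u ≤ 2*((m₂:ℝ)*D)*u := by
            apply mul_le_mul_of_nonneg_right _ hu0.le
            linarith [hble]
          linarith
  -- sup over SD
  have hDle : D ≤ (M*(u*R) + 2*((m₂:ℝ)*D)*u)/(((Q:ℝ)+2)*(u-1)) := by
    rw [hD_def]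
    apply Real.sSup_le
    · rintro r ⟨x, T, hx, hT, rfl⟩
      rw [le_div_iff₀ hc0]
      exact hkey x T hx hT
    · positivity
  have hD2 : D * (2*((Q:ℝ)+2)) ≤ M * (u*R) := by
    have h1 : D * (((Q:ℝ)+2)*(u-1)) ≤ M*(u*R) + 2*((m₂:ℝ)*D)*u :=
      (le_div_iff₀ hc0).mp hDle
    have hc2 : ((Q:ℝ)+2)*(u-1) - 2*(m₂:ℝ)*u = 2*((Q:ℝ)+2) := by
      linear_combination u*hQR + hu_eq
    have h2 : D * (2*((Q:ℝ)+2)) = D*(((Q:ℝ)+2)*(u-1)) - 2*((m₂:ℝ)*D)*u := by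
      linear_combination (-D) * hc2
    linarith
  -- final constant computation
  have hCst : u*R = 2*((Q:ℝ)+2) *
      (3 * Real.sqrt (3 * ((Q : ℝ) + 2)) / (2 * ((m : ℝ) + 2) ^ ((3 : ℝ) / 2))) := by
    rw [← hP32, hu_def, Real.div_rpow (by positivity) hm2R.le]
    rw [show (3:ℝ)/2 = 1 + 1/2 by norm_num, Real.rpow_add (by positivity : (0:ℝ) < 3*((Q:ℝ)+2)),
      Real.rpow_one, ← Real.sqrt_eq_rpow]
    have hmp : (0:ℝ) < ((m:ℝ)+2)^((1:ℝ) + 1/2) := Real.rpow_pos_of_pos hm2R _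
    field_simp
  have hDC : D ≤ (3 * Real.sqrt (3 * ((Q : ℝ) + 2)) /
      (2 * ((m : ℝ) + 2) ^ ((3 : ℝ) / 2))) * M := by
    have h := hD2
    rw [hCst] at h
    have h2Q : (0:ℝ) < 2*((Q:ℝ)+2) := by positivity
    have := (mul_le_mul_iff_left₀ h2Q).mp (by nlinarith [h] :
      D * (2*((Q:ℝ)+2)) ≤ ((3 * Real.sqrt (3 * ((Q : ℝ) + 2)) /
      (2 * ((m : ℝ) + 2) ^ ((3 : ℝ) / 2))) * M) * (2*((Q:ℝ)+2)))
    exact this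
  -- relating deltaOf to D
  have hδ : deltaOf g J ≤ D := by
    rw [deltaOf, hdim₁]
    have hsup : sSup ((fun T => hsNorm (J T ∘ₗ J T + LinearMap.id)) ''
        {T : V₂ | gnorm g T = 1}) ≤ Real.sqrt (m:ℝ) * D := by
      apply Real.sSup_le
      · rintro y ⟨T, hT, rfl⟩
        have h := aux_hsNorm_le (hAsymm T) hD0 (fun x hx => hDmem x T hx hT)
        rw [hdim₁] at h
        simpa [hA_def] using h
      · positivity
    have hsm : (0:ℝ) < Real.sqrt (m:ℝ) := Real.sqrt_pos.mpr (by linarith)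
    calc (Real.sqrt (m:ℕ))⁻¹ * sSup ((fun T => hsNorm (J T ∘ₗ J T + LinearMap.id)) ''
          {T : V₂ | gnorm g T = 1})
        ≤ (Real.sqrt (m:ℝ))⁻¹ * (Real.sqrt (m:ℝ) * D) := by
          apply mul_le_mul_of_nonneg_left hsup (by positivity)
      _ = D := by
          rw [← mul_assoc, inv_mul_cancel₀ (ne_of_gt hsm), one_mul]
  exact hδ.trans hDC


end
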